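/- Let 1/√3 < y₀ < 3/√19, let the sequences (xᵢ), (yᵢ), (aᵢ), (bᵢ) be defined by the strip recursion, with deviations αᵢ = aᵢ − (2i−1), βᵢ = bᵢ − (2i−1) and hᵢ = 1 + α_{i+1} + β_{i+1} for i ≥ 0. Then h₀ > 2 and for every i ≥ 1 one has 2 < h_{i−1} < hᵢ; in particular the sequence (hᵢ)ᵢ≥₀ is strictly increasing and bounded below by 2. -/
import Mathlib


noncomputable section

/-- The denominator `Dᵢ = (aᵢ − x_{i−1})(1 + y_{i−1}) + (bᵢ − x_{i−1})(1 − y_{i−1})`. -/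
def StripDenom (x y a b : ℕ → ℝ) (i : ℕ) : ℝ :=
  (a i - x (i - 1)) * (1 + y (i - 1)) + (b i - x (i - 1)) * (1 - y (i - 1))

/-- The strip recursion: `x₀ = 0`, `a₁ = 1/(1 − y₀)`, `b₁ = 1/(1 + y₀)`, and for `i ≥ 1`:
`xᵢ = x_{i−1} + 2 − 2(aᵢ − bᵢ)y_{i−1}/Dᵢ`, `yᵢ = y_{i−1} − 4y_{i−1}/Dᵢ`,
`a_{i+1} = aᵢ + 2/(1 − yᵢ)`, `b_{i+1} = bᵢ + 2/(1 + yᵢ)`. -/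
def StripRec (x y a b : ℕ → ℝ) : Prop :=
  x 0 = 0 ∧ a 1 = 1 / (1 - y 0) ∧ b 1 = 1 / (1 + y 0) ∧
    ∀ i : ℕ, 1 ≤ i →
      x i = x (i - 1) + 2 - 2 * (a i - b i) * y (i - 1) / StripDenom x y a b i ∧
      y i = y (i - 1) - 4 * y (i - 1) / StripDenom x y a b i ∧
      a (i + 1) = a i + 2 / (1 - y i) ∧
      b (i + 1) = b i + 2 / (1 + y i)

lemma key_identity (A B X Y z D : ℝ) (hD : D ≠ 0) (h1 : 1 - z ≠ 0) (h2 : 1 + z ≠ 0)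
    (hDdef : D = (A - X) * (1 + Y) + (B - X) * (1 - Y))
    (hz : z = Y - 4 * Y / D) :
    (A + 2/(1-z) - (X + 2 - 2*(A-B)*Y/D)) * (1+z)
      + (B + 2/(1+z) - (X + 2 - 2*(A-B)*Y/D)) * (1-z)
      = D + 8*z^2 / ((1-z)*(1+z)) := by
  have step : (A + 2/(1-z) - (X + 2 - 2*(A-B)*Y/D)) * (1+z)
      + (B + 2/(1+z) - (X + 2 - 2*(A-B)*Y/D)) * (1-z)
      - (D + 8*z^2 / ((1-z)*(1+z)))
      = (A-B)*(z - (Y - 4*Y/D)) + (((A-X)*(1+Y)+(B-X)*(1-Y)) - D) := by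
    field_simp
    ring
  have e1 : z - (Y - 4*Y/D) = 0 := by rw [← hz]; ring
  have e2 : ((A-X)*(1+Y)+(B-X)*(1-Y)) - D = 0 := by rw [hDdef]; ring
  rw [e1, e2] at step
  linarith

lemma ystep (yn yn1 Dn1 : ℝ) (hyn : 0 < yn) (hyn1 : yn < 1) (hD : 4 < Dn1)
    (heq : yn1 = yn - 4 * yn / Dn1) : 0 < yn1 ∧ yn1 < 1 := by
  have hDpos : 0 < Dn1 := by linarith
  constructor
  · have h4 : 4 / Dn1 < 1 := (div_lt_one hDpos).mpr (by linarith)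
    have : yn1 = yn * (1 - 4 / Dn1) := by rw [heq]; ring
    rw [this]
    exact mul_pos hyn (by linarith)
  · have : 0 < 4 * yn / Dn1 := by positivity
    linarith [heq ▸ (by linarith : yn - 4 * yn / Dn1 < 1)]

/-- For `1/√3 < y₀ < 3/√19` and `hᵢ = 1 + α_{i+1} + β_{i+1}` (with `αᵢ = aᵢ − (2i−1)`,
`βᵢ = bᵢ − (2i−1)`), one has `h₀ > 2` and `2 < h_{i−1} < hᵢ` for all `i ≥ 1`;
in particular `(hᵢ)` is strictly increasing and bounded below by `2`. -/
theorem statement8 (x y a b : ℕ → ℝ)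
    (hy0 : 1 / Real.sqrt 3 < y 0) (hy0' : y 0 < 3 / Real.sqrt 19)
    (hrec : StripRec x y a b)
    (h : ℕ → ℝ)
    (hh : ∀ i : ℕ, h i = 1 + (a (i + 1) - (2 * ((i : ℝ) + 1) - 1)) +
      (b (i + 1) - (2 * ((i : ℝ) + 1) - 1))) :
    2 < h 0 ∧
    (∀ i : ℕ, 1 ≤ i → 2 < h (i - 1) ∧ h (i - 1) < h i) ∧
    StrictMono h ∧ (∀ i : ℕ, 2 < h i) := by
  obtain ⟨hx0, ha1, hb1, hstep⟩ := hrec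
  -- basic facts about y 0
  have s3 : (0:ℝ) < Real.sqrt 3 := Real.sqrt_pos.mpr (by norm_num)
  have hy0pos : 0 < y 0 := lt_trans (by positivity) hy0
  have s19 : Real.sqrt 19 ^ 2 = 19 := Real.sq_sqrt (by norm_num)
  have h19 : (3:ℝ) < Real.sqrt 19 := by
    nlinarith [Real.sqrt_nonneg 19]
  have hy0lt1 : y 0 < 1 := by
    have : (3:ℝ) / Real.sqrt 19 < 1 := (div_lt_one (by linarith)).mpr h19
    linarith
  have s3sq : Real.sqrt 3 ^ 2 = 3 := Real.sq_sqrt (by norm_num)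
  have hy0sq : 1/3 < (y 0)^2 := by
    have h1 : 1 < y 0 * Real.sqrt 3 := by
      rw [div_lt_iff₀ s3] at hy0; linarith
    nlinarith [sq_nonneg (y 0 * Real.sqrt 3 - 1)]
  have h1m : (0:ℝ) < 1 - y 0 := by linarith
  have h1p : (0:ℝ) < 1 + y 0 := by linarith
  -- base value of D
  have hD1 : 4 < StripDenom x y a b 1 := by
    have hdef : StripDenom x y a b 1 = (a 1 - x 0) * (1 + y 0) + (b 1 - x 0) * (1 - y 0) := rfl
    rw [hdef, hx0, ha1, hb1]
    have key : 1 / (1 - y 0) * (1 + y 0) + 1 / (1 + y 0) * (1 - y 0)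
        = 2 * (1 + (y 0)^2) / ((1 - y 0) * (1 + y 0)) := by
      field_simp; ring
    have : (4:ℝ) * ((1 - y 0) * (1 + y 0)) < 2 * (1 + (y 0)^2) := by nlinarith
    have h4 : (4:ℝ) < 2 * (1 + (y 0)^2) / ((1 - y 0) * (1 + y 0)) :=
      (lt_div_iff₀ (by positivity)).mpr this
    calc (4:ℝ) < 2 * (1 + (y 0)^2) / ((1 - y 0) * (1 + y 0)) := h4
      _ = (1 / (1 - y 0) - 0) * (1 + y 0) + (1 / (1 + y 0) - 0) * (1 - y 0) := by
          rw [← key]; ring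
  -- main invariant
  have main : ∀ i : ℕ, 1 ≤ i → 0 < y i ∧ y i < 1 ∧ 4 < StripDenom x y a b i := by
    intro i hi
    induction i with
    | zero => omega
    | succ n ih =>
      rcases Nat.eq_zero_or_pos n with hn | hn
      · subst hn
        have hy1eq : y 1 = y 0 - 4 * y 0 / StripDenom x y a b 1 := by
          have := (hstep 1 le_rfl).2.1
          simpa using this
        obtain ⟨hp, hl⟩ := ystep (y 0) (y 1) _ hy0pos hy0lt1 hD1 hy1eq
        exact ⟨hp, hl, hD1⟩
      · obtain ⟨hyn, hyn1, hDn⟩ := ih hn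
        have hDnpos : (0:ℝ) < StripDenom x y a b n := by linarith
        have hzm : (1:ℝ) - y n ≠ 0 := by linarith
        have hzp : (1:ℝ) + y n ≠ 0 := by linarith
        obtain ⟨hxn, hyn', han, hbn⟩ := hstep n hn
        have hDn1 : StripDenom x y a b (n+1)
            = StripDenom x y a b n + 8 * (y n)^2 / ((1 - y n) * (1 + y n)) := by
          have hdef : StripDenom x y a b (n+1)
              = (a (n+1) - x n) * (1 + y n) + (b (n+1) - x n) * (1 - y n) := by
            unfold StripDenom; norm_num
          rw [hdef, han, hbn, hxn]
          exact key_identity (a n) (b n) (x (n-1)) (y (n-1)) (y n)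
            (StripDenom x y a b n) (ne_of_gt hDnpos) hzm hzp rfl hyn'
        have hD4 : 4 < StripDenom x y a b (n+1) := by
          rw [hDn1]
          have : 0 ≤ 8 * (y n)^2 / ((1 - y n) * (1 + y n)) :=
            div_nonneg (by positivity)
              (le_of_lt (mul_pos (by linarith) (by linarith)))
          linarith
        have hy1eq : y (n+1) = y n - 4 * y n / StripDenom x y a b (n+1) := by
          have := (hstep (n+1) (by omega)).2.1
          simpa using this
        obtain ⟨hp, hl⟩ := ystep (y n) (y (n+1)) _ hyn hyn1 hD4 hy1eq
        exact ⟨hp, hl, hD4⟩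
  -- h 0 > 2
  have h0 : 2 < h 0 := by
    have e : h 0 = 1 / (1 - y 0) + 1 / (1 + y 0) - 1 := by
      rw [hh 0, ha1, hb1]; norm_num; ring
    have hsum : 1 / (1 - y 0) + 1 / (1 + y 0) = 2 / ((1 - y 0) * (1 + y 0)) := by
      rw [div_add_div _ _ (ne_of_gt h1m) (ne_of_gt h1p)]; ring_nf
    have h3 : (3:ℝ) * ((1 - y 0) * (1 + y 0)) < 2 := by nlinarith
    have hlt : (3:ℝ) < 2 / ((1 - y 0) * (1 + y 0)) := (lt_div_iff₀ (by positivity)).mpr h3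
    linarith [e, hsum, hlt]
  -- successive differences
  have hsucc : ∀ n : ℕ, h n < h (n+1) := by
    intro n
    obtain ⟨hyp, hyl, _⟩ := main (n+1) (by omega)
    obtain ⟨_, _, han, hbn⟩ := hstep (n+1) (by omega)
    have hzm : (0:ℝ) < 1 - y (n+1) := by linarith
    have hzp : (0:ℝ) < 1 + y (n+1) := by linarith
    have hsum : 2 / (1 - y (n+1)) + 2 / (1 + y (n+1))
        = 4 / ((1 - y (n+1)) * (1 + y (n+1))) := by
      field_simp; ring
    have h4 : (4:ℝ) * ((1 - y (n+1)) * (1 + y (n+1))) < 4 := by nlinarith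
    have hlt : (4:ℝ) < 4 / ((1 - y (n+1)) * (1 + y (n+1))) :=
      (lt_div_iff₀ (by positivity)).mpr h4
    have e1 := hh n
    have e2 := hh (n+1)
    rw [han, hbn] at e2
    push_cast at e1 e2
    linarith [e1, e2, hsum, hlt]
  have hmono : StrictMono h := strictMono_nat_of_lt_succ hsucc
  have hbound : ∀ i : ℕ, 2 < h i := by
    intro i
    calc (2:ℝ) < h 0 := h0
      _ ≤ h i := hmono.monotone (Nat.zero_le i)
  refine ⟨h0, ?_, hmono, hbound⟩
  intro i hi
  obtain ⟨j, rfl⟩ := Nat.exists_eq_add_of_le hi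
  simp only [Nat.add_sub_cancel, Nat.add_comm 1 j] at *
  exact ⟨hbound j, hsucc j⟩
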